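/- The quaternion algebra ℍ[ℚ₂, −1, −1] over the field ℚ₂ of 2-adic numbers is a division algebra: every nonzero element is a unit. (That is, the Hamilton quaternion ℚ-algebra Q(−1, −1 | ℚ) is ramified at 2.) -/

import Mathlib

open Quaternion

lemma zmod8_lemma : ∀ a b c d : ZMod 8, a^2+b^2+c^2+d^2 = 0 →
    4*a = 0 ∧ 4*b = 0 ∧ 4*c = 0 ∧ 4*d = 0 := by decide

lemma step (a b c d : ℤ_[2]) (h : a^2+b^2+c^2+d^2 = 0) : 2 ∣ a := by
  have h8 : (PadicInt.toZModPow 3 a)^2 + (PadicInt.toZModPow 3 b)^2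
      + (PadicInt.toZModPow 3 c)^2 + (PadicInt.toZModPow 3 d)^2 = 0 := by
    have := congrArg (PadicInt.toZModPow (p := 2) 3) h
    simpa using this
  have h4 : (4 : ZMod (2^3)) * (PadicInt.toZModPow 3 a) = 0 := by
    exact (zmod8_lemma _ _ _ _ h8).1
  have hk : (4 * a) ∈ RingHom.ker (PadicInt.toZModPow (p := 2) 3) := by
    simp only [RingHom.mem_ker, map_mul, map_ofNat]
    exact h4
  rw [PadicInt.ker_toZModPow, Ideal.mem_span_singleton] at hk
  push_cast at hk
  rw [show (2:ℤ_[2])^3 = 4 * 2 by norm_num] at hk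
  exact (mul_dvd_mul_iff_left (by norm_num : (4:ℤ_[2]) ≠ 0)).mp hk

lemma pow_dvd (n : ℕ) : ∀ a b c d : ℤ_[2], a^2+b^2+c^2+d^2 = 0 → 2^n ∣ a := by
  induction n with
  | zero => intro a b c d _; simpa using one_dvd a
  | succ n ih =>
    intro a b c d h
    obtain ⟨a', ha⟩ := step a b c d h
    obtain ⟨b', hb⟩ := step b a c d (by linear_combination h)
    obtain ⟨c', hc⟩ := step c a b d (by linear_combination h)
    obtain ⟨d', hd⟩ := step d a b c (by linear_combination h)
    have h' : a'^2 + b'^2 + c'^2 + d'^2 = 0 := by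
      have h4 : (4:ℤ_[2]) * (a'^2+b'^2+c'^2+d'^2) = 4 * 0 := by
        rw [mul_zero]; subst ha hb hc hd; linear_combination h
      exact mul_left_cancel₀ (by norm_num : (4:ℤ_[2]) ≠ 0) h4
    obtain ⟨a'', ha''⟩ := ih a' b' c' d' h'
    exact ⟨a'', by rw [ha, ha'']; ring⟩

lemma int_version (a b c d : ℤ_[2]) (h : a^2+b^2+c^2+d^2 = 0) : a = 0 := by
  by_contra ha
  have h1 : ‖a‖ > 0 := norm_pos_iff.mpr ha
  obtain ⟨k, hk⟩ := PadicInt.exists_pow_neg_lt 2 h1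
  have h2 : ‖a‖ ≤ (2:ℝ)^(-(k:ℤ)) := by
    have hd := pow_dvd k a b c d h
    have : a ∈ Ideal.span {(2:ℤ_[2])^k} := by
      rw [Ideal.mem_span_singleton]; exact_mod_cast hd
    have := (PadicInt.norm_le_pow_iff_mem_span_pow a k).mpr this
    exact_mod_cast this
  exact absurd (h2.trans_lt (by exact_mod_cast hk)) (lt_irrefl _)

lemma rat_version (a b c d : ℚ_[2]) (h : a^2+b^2+c^2+d^2 = 0) : a = 0 := by
  obtain ⟨N, hNa, hNb, hNc, hNd⟩ : ∃ N : ℕ, ‖a‖ ≤ 2^N ∧ ‖b‖ ≤ 2^N ∧ ‖c‖ ≤ 2^N ∧ ‖d‖ ≤ 2^N := by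
    obtain ⟨n1, h1⟩ := pow_unbounded_of_one_lt ‖a‖ (by norm_num : (1:ℝ) < 2)
    obtain ⟨n2, h2⟩ := pow_unbounded_of_one_lt ‖b‖ (by norm_num : (1:ℝ) < 2)
    obtain ⟨n3, h3⟩ := pow_unbounded_of_one_lt ‖c‖ (by norm_num : (1:ℝ) < 2)
    obtain ⟨n4, h4⟩ := pow_unbounded_of_one_lt ‖d‖ (by norm_num : (1:ℝ) < 2)
    exact ⟨n1+n2+n3+n4,
      (h1.le.trans (pow_le_pow_right₀ one_le_two (by omega))),
      (h2.le.trans (pow_le_pow_right₀ one_le_two (by omega))),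
      (h3.le.trans (pow_le_pow_right₀ one_le_two (by omega))),
      (h4.le.trans (pow_le_pow_right₀ one_le_two (by omega)))⟩
  have hnorm2 : ‖(2:ℚ_[2])‖ = 1/2 := by
    simpa using Padic.norm_p (p := 2)
  have key : ∀ x : ℚ_[2], ‖x‖ ≤ 2^N → ‖(2:ℚ_[2])^N * x‖ ≤ 1 := by
    intro x hx
    rw [norm_mul, norm_pow, hnorm2]
    calc (1/2:ℝ)^N * ‖x‖ ≤ (1/2)^N * 2^N := by
          apply mul_le_mul_of_nonneg_left hx (by positivity)
      _ = 1 := by rw [← mul_pow]; norm_num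
  set A : ℤ_[2] := ⟨(2:ℚ_[2])^N * a, key a hNa⟩
  set B : ℤ_[2] := ⟨(2:ℚ_[2])^N * b, key b hNb⟩
  set C : ℤ_[2] := ⟨(2:ℚ_[2])^N * c, key c hNc⟩
  set D : ℤ_[2] := ⟨(2:ℚ_[2])^N * d, key d hNd⟩
  have hsum : A^2 + B^2 + C^2 + D^2 = 0 := by
    apply Subtype.ext
    rw [PadicInt.coe_add, PadicInt.coe_add, PadicInt.coe_add, PadicInt.coe_pow, PadicInt.coe_pow, PadicInt.coe_pow, PadicInt.coe_pow]
    push_cast [A, B, C, D]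
    linear_combination ((2:ℚ_[2])^N)^2 * h
  have hA : A = 0 := int_version A B C D hsum
  have : (2:ℚ_[2])^N * a = 0 := congrArg Subtype.val hA
  rcases mul_eq_zero.mp this with h' | h'
  · exact absurd h' (pow_ne_zero N two_ne_zero)
  · exact h'
theorem quaternionAlgebra_padic_two_hamilton_isDivision :
    ∀ x : ℍ[ℚ_[2], -1, -1], x ≠ 0 → IsUnit x := by
  intro x hx
  let x' : ℍ[ℚ_[2]] := x
  have hn : normSq x' ≠ 0 := by
    intro h0
    rw [normSq_def'] at h0
    apply hx
    ext
    · exact rat_version _ _ _ _ h0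
    · exact rat_version x'.imI x'.re x'.imJ x'.imK (by linear_combination h0)
    · exact rat_version x'.imJ x'.re x'.imI x'.imK (by linear_combination h0)
    · exact rat_version x'.imK x'.re x'.imI x'.imJ (by linear_combination h0)
  set y : ℍ[ℚ_[2]] := (normSq x')⁻¹ • star x' with hy
  have h1 : x' * y = 1 := by
    rw [hy, Algebra.mul_smul_comm (normSq x')⁻¹ x' (star x'), self_mul_star, ← coe_smul, smul_eq_mul, inv_mul_cancel₀ hn, coe_one]
  have h2 : y * x' = 1 := by
    rw [hy, Algebra.smul_mul_assoc (normSq x')⁻¹ (star x') x', star_mul_self, ← coe_smul, smul_eq_mul, inv_mul_cancel₀ hn, coe_one]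
  exact ⟨⟨x, y, h1, h2⟩, rfl⟩
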